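/- Let U ⊆ ℝ² be open, let A : U → Sym₂(ℝ) be a twice continuously differentiable field of symmetric 2×2 matrices, and let p : U → ℝ be three times continuously differentiable. Assume v := ⟨A∇p, ∇p⟩ > 0 on U and set φ = ln v, 𝐄 = 2∇²p·A·∇p, and 𝐆 = v^{-1}(⟨∂₁A ∇p, ∇p⟩, ⟨∂₂A ∇p, ∇p⟩)ᵀ. Then on U: div(A∇φ) = v^{-1}·div(A𝐄) − v^{-2}·⟨A𝐄, 𝐄⟩ − v^{-1}·⟨A𝐆, 𝐄⟩ + div(A𝐆). -/

import Mathlib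

open Matrix

/-- Partial derivative in the `i`-th coordinate direction. -/
noncomputable def pd (i : Fin 2) (f : (Fin 2 → ℝ) → ℝ) (x : Fin 2 → ℝ) : ℝ :=
  fderiv ℝ f x (Pi.single i 1)

/-- Gradient of a scalar function on `ℝ²`. -/
noncomputable def grad (f : (Fin 2 → ℝ) → ℝ) (x : Fin 2 → ℝ) : Fin 2 → ℝ :=
  fun i => pd i f x

/-- Divergence of a vector field on `ℝ²`. -/
noncomputable def divg (F : (Fin 2 → ℝ) → Fin 2 → ℝ) (x : Fin 2 → ℝ) : ℝ :=
  ∑ i, pd i (fun y => F y i) x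

/-- Hessian matrix of a scalar function on `ℝ²`. -/
noncomputable def hess (p : (Fin 2 → ℝ) → ℝ) (x : Fin 2 → ℝ) : Matrix (Fin 2) (Fin 2) ℝ :=
  Matrix.of fun i j => pd i (fun y => pd j p y) x

variable {f g : (Fin 2 → ℝ) → ℝ} {x : Fin 2 → ℝ} {i : Fin 2}

private lemma pd_congr (h : f =ᶠ[nhds x] g) : pd i f x = pd i g x := by
  unfold pd; rw [h.fderiv_eq]

private lemma pd_add (hf : DifferentiableAt ℝ f x) (hg : DifferentiableAt ℝ g x) :
    pd i (fun y => f y + g y) x = pd i f x + pd i g x := by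
  unfold pd; rw [fderiv_fun_add hf hg]; simp

private lemma pd_mul (hf : DifferentiableAt ℝ f x) (hg : DifferentiableAt ℝ g x) :
    pd i (fun y => f y * g y) x = pd i f x * g x + f x * pd i g x := by
  unfold pd; rw [fderiv_fun_mul hf hg]
  simp only [ContinuousLinearMap.add_apply, ContinuousLinearMap.smul_apply, smul_eq_mul]
  ring

private lemma pd_inv (hf : DifferentiableAt ℝ f x) (h0 : f x ≠ 0) :
    pd i (fun y => (f y)⁻¹) x = -((f x) ^ 2)⁻¹ * pd i f x := by
  have h : HasFDerivAt (fun y => (f y)⁻¹) (-(f x ^ 2)⁻¹ • fderiv ℝ f x) x :=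
    (hasDerivAt_inv h0).comp_hasFDerivAt x hf.hasFDerivAt
  unfold pd
  rw [h.fderiv]
  simp

private lemma pd_log (hf : DifferentiableAt ℝ f x) (h0 : f x ≠ 0) :
    pd i (fun y => Real.log (f y)) x = (f x)⁻¹ * pd i f x := by
  have h := hf.hasFDerivAt.log h0
  unfold pd
  rw [h.fderiv]
  simp

private lemma contDiffOn_pd {U : Set (Fin 2 → ℝ)} (hU : IsOpen U)
    {n m : WithTop ℕ∞} (hf : ContDiffOn ℝ n f U)
    (hmn : m + 1 ≤ n) (i : Fin 2) : ContDiffOn ℝ m (fun y => pd i f y) U := by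
  have h1 : ContDiffOn ℝ m (fderiv ℝ f) U := hf.fderiv_of_isOpen hU hmn
  exact (ContinuousLinearMap.apply ℝ ℝ (Pi.single i 1 : Fin 2 → ℝ)).contDiff.comp_contDiffOn h1

private lemma diffAt_of_contDiffOn {U : Set (Fin 2 → ℝ)} (hU : IsOpen U)
    {n : WithTop ℕ∞} (hf : ContDiffOn ℝ n f U) (hn : 1 ≤ n) {y : Fin 2 → ℝ} (hy : y ∈ U) :
    DifferentiableAt ℝ f y :=
  ((hf.differentiableOn (zero_lt_one.trans_le hn).ne') y hy).differentiableAt (hU.mem_nhds hy)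

private lemma pd_quad {a00 a01 a10 a11 g0 g1 : (Fin 2 → ℝ) → ℝ}
    (d00 : DifferentiableAt ℝ a00 x) (d01 : DifferentiableAt ℝ a01 x)
    (d10 : DifferentiableAt ℝ a10 x) (d11 : DifferentiableAt ℝ a11 x)
    (e0 : DifferentiableAt ℝ g0 x) (e1 : DifferentiableAt ℝ g1 x) :
    pd i (fun y => a00 y * g0 y * g0 y + a01 y * g1 y * g0 y
        + a10 y * g0 y * g1 y + a11 y * g1 y * g1 y) x =
      (pd i a00 x * g0 x * g0 x + pd i a01 x * g1 x * g0 x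
        + pd i a10 x * g0 x * g1 x + pd i a11 x * g1 x * g1 x)
      + (a00 x * pd i g0 x * g0 x + a00 x * g0 x * pd i g0 x
        + a01 x * pd i g1 x * g0 x + a01 x * g1 x * pd i g0 x
        + a10 x * pd i g0 x * g1 x + a10 x * g0 x * pd i g1 x
        + a11 x * pd i g1 x * g1 x + a11 x * g1 x * pd i g1 x) := by
  have m1 : DifferentiableAt ℝ (fun y => a00 y * g0 y * g0 y) x := (d00.mul e0).mul e0
  have m2 : DifferentiableAt ℝ (fun y => a01 y * g1 y * g0 y) x := (d01.mul e1).mul e0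
  have m3 : DifferentiableAt ℝ (fun y => a10 y * g0 y * g1 y) x := (d10.mul e0).mul e1
  have m4 : DifferentiableAt ℝ (fun y => a11 y * g1 y * g1 y) x := (d11.mul e1).mul e1
  have m12 : DifferentiableAt ℝ (fun y => a00 y * g0 y * g0 y + a01 y * g1 y * g0 y) x :=
    m1.add m2
  have m123 : DifferentiableAt ℝ
      (fun y => a00 y * g0 y * g0 y + a01 y * g1 y * g0 y + a10 y * g0 y * g1 y) x :=
    m12.add m3
  rw [pd_add m123 m4, pd_add m12 m3, pd_add m1 m2,
    pd_mul (f := fun y => a00 y * g0 y) (d00.mul e0) e0, pd_mul d00 e0,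
    pd_mul (f := fun y => a01 y * g1 y) (d01.mul e1) e0, pd_mul d01 e1,
    pd_mul (f := fun y => a10 y * g0 y) (d10.mul e0) e1, pd_mul d10 e0,
    pd_mul (f := fun y => a11 y * g1 y) (d11.mul e1) e1, pd_mul d11 e1]
  ring

/-- The identity
`div(A∇φ) = v⁻¹ div(A𝐄) − v⁻² ⟨A𝐄, 𝐄⟩ − v⁻¹ ⟨A𝐆, 𝐄⟩ + div(A𝐆)` for
`φ = ln v`, `v = ⟨A∇p, ∇p⟩ > 0`, `𝐄 = 2∇²p·A·∇p`,
`𝐆 = v⁻¹(⟨∂₁A ∇p, ∇p⟩, ⟨∂₂A ∇p, ∇p⟩)ᵀ`. -/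
theorem stmt9 (U : Set (Fin 2 → ℝ)) (hU : IsOpen U)
    (A : (Fin 2 → ℝ) → Matrix (Fin 2) (Fin 2) ℝ)
    (hAsymm : ∀ x ∈ U, (A x).IsSymm)
    (hA : ∀ i j, ContDiffOn ℝ 2 (fun x => A x i j) U)
    (p : (Fin 2 → ℝ) → ℝ) (hp : ContDiffOn ℝ 3 p U)
    (v : (Fin 2 → ℝ) → ℝ) (hv : v = fun y => (A y).mulVec (grad p y) ⬝ᵥ grad p y)
    (hvpos : ∀ x ∈ U, 0 < v x)
    (φ : (Fin 2 → ℝ) → ℝ) (hφ : φ = fun y => Real.log (v y))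
    (E : (Fin 2 → ℝ) → Fin 2 → ℝ)
    (hE : E = fun y => (2 : ℝ) • (hess p y).mulVec ((A y).mulVec (grad p y)))
    (G : (Fin 2 → ℝ) → Fin 2 → ℝ)
    (hG : G = fun y => (v y)⁻¹ •
      fun i => (Matrix.of fun k l => pd i (fun z => A z k l) y).mulVec (grad p y) ⬝ᵥ grad p y)
    (x : Fin 2 → ℝ) (hx : x ∈ U) :
    divg (fun y => (A y).mulVec (grad φ y)) x =
      (v x)⁻¹ * divg (fun y => (A y).mulVec (E y)) x
        - ((v x)⁻¹) ^ 2 * ((A x).mulVec (E x) ⬝ᵥ E x)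
        - (v x)⁻¹ * ((A x).mulVec (G x) ⬝ᵥ E x)
        + divg (fun y => (A y).mulVec (G y)) x := by
  have hvne : v x ≠ 0 := (hvpos x hx).ne'
  -- smoothness and differentiability of the atomic functions
  have hgC : ∀ l : Fin 2, ContDiffOn ℝ 2 (fun y => pd l p y) U :=
    fun l => contDiffOn_pd hU hp (by norm_num) l
  have hHC : ∀ j l : Fin 2, ContDiffOn ℝ 1 (fun y => pd j (fun z => pd l p z) y) U :=
    fun j l => contDiffOn_pd hU (hgC l) (by norm_num) j
  have hA'C : ∀ j k l : Fin 2, ContDiffOn ℝ 1 (fun y => pd j (fun z => A z k l) y) U :=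
    fun j k l => contDiffOn_pd hU (hA k l) (by norm_num) j
  have da : ∀ k l : Fin 2, ∀ y ∈ U, DifferentiableAt ℝ (fun z => A z k l) y :=
    fun k l y hy => diffAt_of_contDiffOn hU (hA k l) (by norm_num) hy
  have dg : ∀ l : Fin 2, ∀ y ∈ U, DifferentiableAt ℝ (fun z => pd l p z) y :=
    fun l y hy => diffAt_of_contDiffOn hU (hgC l) (by norm_num) hy
  have dH : ∀ j l : Fin 2, ∀ y ∈ U,
      DifferentiableAt ℝ (fun z => pd j (fun w => pd l p w) z) y :=
    fun j l y hy => diffAt_of_contDiffOn hU (hHC j l) (by norm_num) hy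
  have da' : ∀ j k l : Fin 2, ∀ y ∈ U,
      DifferentiableAt ℝ (fun z => pd j (fun w => A w k l) z) y :=
    fun j k l y hy => diffAt_of_contDiffOn hU (hA'C j k l) (by norm_num) hy
  -- explicit formula for v
  have hv' : v = fun y => A y 0 0 * pd 0 p y * pd 0 p y + A y 0 1 * pd 1 p y * pd 0 p y
      + A y 1 0 * pd 0 p y * pd 1 p y + A y 1 1 * pd 1 p y * pd 1 p y := by
    rw [hv]; funext y
    simp only [Matrix.mulVec, dotProduct, grad, Fin.sum_univ_two]
    ring
  have dv : ∀ y ∈ U, DifferentiableAt ℝ v y := by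
    intro y hy
    rw [hv']
    exact (((((da 0 0 y hy).mul (dg 0 y hy)).mul (dg 0 y hy)).add
      (((da 0 1 y hy).mul (dg 1 y hy)).mul (dg 0 y hy))).add
      (((da 1 0 y hy).mul (dg 0 y hy)).mul (dg 1 y hy))).add
      (((da 1 1 y hy).mul (dg 1 y hy)).mul (dg 1 y hy))
  -- explicit formula for E
  have hEy : ∀ (y : Fin 2 → ℝ) (j : Fin 2), E y j =
      2 * (pd j (fun w => pd 0 p w) y * (A y 0 0 * pd 0 p y + A y 0 1 * pd 1 p y)
        + pd j (fun w => pd 1 p w) y * (A y 1 0 * pd 0 p y + A y 1 1 * pd 1 p y)) := by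
    intro y j
    rw [hE]
    simp only [Pi.smul_apply, smul_eq_mul, Matrix.mulVec, dotProduct, grad, hess,
      Fin.sum_univ_two, Matrix.of_apply]
  have dE : ∀ j : Fin 2, ∀ y ∈ U, DifferentiableAt ℝ (fun z => E z j) y := by
    intro j y hy
    have h : (fun z => E z j) = fun z =>
        2 * (pd j (fun w => pd 0 p w) z * (A z 0 0 * pd 0 p z + A z 0 1 * pd 1 p z)
          + pd j (fun w => pd 1 p w) z * (A z 1 0 * pd 0 p z + A z 1 1 * pd 1 p z)) :=
      funext fun z => hEy z j
    rw [h]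
    exact (((dH j 0 y hy).mul (((da 0 0 y hy).mul (dg 0 y hy)).add
        ((da 0 1 y hy).mul (dg 1 y hy)))).add
      ((dH j 1 y hy).mul (((da 1 0 y hy).mul (dg 0 y hy)).add
        ((da 1 1 y hy).mul (dg 1 y hy))))).const_mul 2
  -- explicit formula for G
  have hGy : ∀ (y : Fin 2 → ℝ) (j : Fin 2), G y j = (v y)⁻¹ *
      (pd j (fun w => A w 0 0) y * pd 0 p y * pd 0 p y
        + pd j (fun w => A w 0 1) y * pd 1 p y * pd 0 p y
        + pd j (fun w => A w 1 0) y * pd 0 p y * pd 1 p y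
        + pd j (fun w => A w 1 1) y * pd 1 p y * pd 1 p y) := by
    intro y j
    rw [hG]
    simp only [Pi.smul_apply, smul_eq_mul, Matrix.mulVec, dotProduct, grad,
      Fin.sum_univ_two, Matrix.of_apply]
    ring
  have dG : ∀ j : Fin 2, ∀ y ∈ U, DifferentiableAt ℝ (fun z => G z j) y := by
    intro j y hy
    have h : (fun z => G z j) = fun z => (v z)⁻¹ *
        (pd j (fun w => A w 0 0) z * pd 0 p z * pd 0 p z
          + pd j (fun w => A w 0 1) z * pd 1 p z * pd 0 p z
          + pd j (fun w => A w 1 0) z * pd 0 p z * pd 1 p z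
          + pd j (fun w => A w 1 1) z * pd 1 p z * pd 1 p z) :=
      funext fun z => hGy z j
    rw [h]
    exact ((dv y hy).inv (hvpos y hy).ne').mul
      ((((((da' j 0 0 y hy).mul (dg 0 y hy)).mul (dg 0 y hy)).add
        (((da' j 0 1 y hy).mul (dg 1 y hy)).mul (dg 0 y hy))).add
        (((da' j 1 0 y hy).mul (dg 0 y hy)).mul (dg 1 y hy))).add
        (((da' j 1 1 y hy).mul (dg 1 y hy)).mul (dg 1 y hy)))
  -- expansion of matrix-vector products
  have hAEy : ∀ (B : (Fin 2 → ℝ) → Fin 2 → ℝ) (i : Fin 2) (y : Fin 2 → ℝ),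
      (A y).mulVec (B y) i = A y i 0 * B y 0 + A y i 1 * B y 1 := by
    intro B i y
    simp [Matrix.mulVec, dotProduct, Fin.sum_univ_two]
  have dAE : ∀ i : Fin 2, ∀ y ∈ U, DifferentiableAt ℝ (fun z => (A z).mulVec (E z) i) y := by
    intro i y hy
    have h : (fun z => (A z).mulVec (E z) i) = fun z => A z i 0 * E z 0 + A z i 1 * E z 1 :=
      funext fun z => hAEy E i z
    rw [h]
    exact ((da i 0 y hy).mul (dE 0 y hy)).add ((da i 1 y hy).mul (dE 1 y hy))
  have dAG : ∀ i : Fin 2, ∀ y ∈ U, DifferentiableAt ℝ (fun z => (A z).mulVec (G z) i) y := by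
    intro i y hy
    have h : (fun z => (A z).mulVec (G z) i) = fun z => A z i 0 * G z 0 + A z i 1 * G z 1 :=
      funext fun z => hAEy G i z
    rw [h]
    exact ((da i 0 y hy).mul (dG 0 y hy)).add ((da i 1 y hy).mul (dG 1 y hy))
  -- the key derivative identity ∇v = E + vG
  have pdv : ∀ y ∈ U, ∀ j : Fin 2, pd j v y = E y j + v y * G y j := by
    intro y hy j
    have hvy : v y ≠ 0 := (hvpos y hy).ne'
    have hs : A y 1 0 = A y 0 1 := (hAsymm y hy).apply 0 1
    conv_lhs => rw [hv']
    rw [pd_quad (da 0 0 y hy) (da 0 1 y hy) (da 1 0 y hy) (da 1 1 y hy)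
      (dg 0 y hy) (dg 1 y hy)]
    rw [hEy y j, hGy y j, hs]
    field_simp
    ring
  -- the derivative of φ
  have pdφ : ∀ y ∈ U, ∀ j : Fin 2, pd j φ y = (v y)⁻¹ * pd j v y := by
    intro y hy j
    rw [hφ]
    exact pd_log (dv y hy) (hvpos y hy).ne'
  -- pointwise identity for the vector field
  have heq : ∀ i : Fin 2, ∀ y ∈ U, (A y).mulVec (grad φ y) i
      = (v y)⁻¹ * ((A y).mulVec (E y) i) + (A y).mulVec (G y) i := by
    intro i y hy
    have hvy : v y ≠ 0 := (hvpos y hy).ne'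
    have h1 : (A y).mulVec (grad φ y) i = A y i 0 * pd 0 φ y + A y i 1 * pd 1 φ y := by
      simp [Matrix.mulVec, dotProduct, grad, Fin.sum_univ_two]
    rw [h1, hAEy E i y, hAEy G i y, pdφ y hy 0, pdφ y hy 1, pdv y hy 0, pdv y hy 1]
    field_simp
    ring
  have dvinv : DifferentiableAt ℝ (fun y => (v y)⁻¹) x := (dv x hx).inv hvne
  have main : ∀ i : Fin 2, pd i (fun y => (A y).mulVec (grad φ y) i) x =
      -((v x) ^ 2)⁻¹ * (E x i + v x * G x i) * ((A x).mulVec (E x) i)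
        + (v x)⁻¹ * pd i (fun y => (A y).mulVec (E y) i) x
        + pd i (fun y => (A y).mulVec (G y) i) x := by
    intro i
    have hee : (fun y => (A y).mulVec (grad φ y) i) =ᶠ[nhds x]
        (fun y => (v y)⁻¹ * ((A y).mulVec (E y) i) + (A y).mulVec (G y) i) :=
      Filter.eventuallyEq_of_mem (hU.mem_nhds hx) (fun y hy => heq i y hy)
    rw [pd_congr hee]
    have d1 : DifferentiableAt ℝ (fun y => (v y)⁻¹ * ((A y).mulVec (E y) i)) x :=
      dvinv.mul (dAE i x hx)
    rw [pd_add d1 (dAG i x hx), pd_mul dvinv (dAE i x hx), pd_inv (dv x hx) hvne,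
      pdv x hx i]
  have hs : A x 0 1 = A x 1 0 := (hAsymm x hx).apply 1 0
  simp only [divg, Fin.sum_univ_two]
  rw [main 0, main 1]
  simp only [hAEy, dotProduct, Fin.sum_univ_two]
  rw [hs]
  field_simp
  ring
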